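/- Let q be a prime with q ≡ 3 (mod 4) and write the fundamental unit of ℚ(√q) as ε_q = x + y√q with x, y ∈ ℤ. Then x is an even integer, one of x+1, x−1 is the square of a natural number, and 2ε_q is the square of an element of ℚ(√q). -/

import Mathlib

open IntermediateField

/-- The real quadratic field ℚ(√d) as a subfield of ℝ. -/
noncomputable def Qsqrt (d : ℕ) : IntermediateField ℚ ℝ :=
  IntermediateField.adjoin ℚ {Real.sqrt d}

/-- `z` is a unit of the ring of integers of the subfield `K` of ℝ. -/
def IsUnitOf (K : IntermediateField ℚ ℝ) (z : ℝ) : Prop :=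
  z ∈ K ∧ z ≠ 0 ∧ IsIntegral ℤ z ∧ IsIntegral ℤ z⁻¹

/-- `ε` is the fundamental unit of the real quadratic field `K`. -/
def IsFundUnit (K : IntermediateField ℚ ℝ) (ε : ℝ) : Prop :=
  IsUnitOf K ε ∧ 1 < ε ∧
    ∀ z : ℝ, IsUnitOf K z → ∃ n : ℤ, z = ε ^ n ∨ z = -(ε ^ n)

namespace Stmt1Aux

open Polynomial

lemma aux_integral (q : ℕ) (a b : ℤ) :
    IsIntegral ℤ ((a:ℝ) + (b:ℝ) * Real.sqrt q) := by
  have hs : Real.sqrt q ^ 2 = (q:ℝ) := Real.sq_sqrt (by positivity)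
  refine ⟨X ^ 2 + (C (-(2*a)) * X + C (a^2 - (q:ℤ)*b^2)), ?_, ?_⟩
  · exact monic_X_pow_add (lt_of_le_of_lt (degree_linear_le) (by norm_num))
  · simp only [eval₂_add, eval₂_mul, eval₂_pow, eval₂_X, eval₂_C]
    simp only [eq_intCast]
    push_cast
    linear_combination (b:ℝ)^2 * hs

lemma aux_mem (q : ℕ) (a b : ℤ) : ((a:ℝ) + (b:ℝ) * Real.sqrt q) ∈ Qsqrt q := by
  have hsq : Real.sqrt q ∈ Qsqrt q := subset_adjoin ℚ _ (Set.mem_singleton _)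
  exact add_mem (intCast_mem _ a) (mul_mem (intCast_mem _ b) hsq)

lemma aux_unit (q : ℕ) (a b : ℤ) (h : a^2 - (q:ℤ)*b^2 = 1) :
    IsUnitOf (Qsqrt q) ((a:ℝ) + (b:ℝ) * Real.sqrt q) := by
  have hs : Real.sqrt q ^ 2 = (q:ℝ) := Real.sq_sqrt (by positivity)
  have h' : (a:ℝ)^2 - (q:ℝ)*(b:ℝ)^2 = 1 := by exact_mod_cast h
  have hkey : ((a:ℝ) + (b:ℝ) * Real.sqrt q) * (((-a:ℤ):ℝ) + ((b:ℤ):ℝ) * Real.sqrt q) = -1 := by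
    push_cast
    linear_combination (b:ℝ)^2 * hs - h'
  have hkey2 : ((a:ℝ) + (b:ℝ) * Real.sqrt q) * (-(((-a:ℤ):ℝ) + ((b:ℤ):ℝ) * Real.sqrt q)) = 1 := by
    rw [mul_neg, hkey, neg_neg]
  refine ⟨aux_mem q a b, left_ne_zero_of_mul_eq_one hkey2, aux_integral q a b, ?_⟩
  rw [inv_eq_of_mul_eq_one_right hkey2]
  have : -(((-a:ℤ):ℝ) + ((b:ℤ):ℝ) * Real.sqrt q) = ((a:ℝ) + ((-b:ℤ):ℝ) * Real.sqrt q) := by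
    push_cast; ring
  rw [this]; exact aux_integral q a (-b)

lemma aux_irr_comb (q : ℕ) (hq : q.Prime) (x y : ℤ) (hy : y ≠ 0) :
    Irrational ((x:ℝ) + (y:ℝ) * Real.sqrt q) := by
  have h1 : Irrational ((y:ℝ) * Real.sqrt q) := (hq.irrational_sqrt).intCast_mul hy
  exact h1.intCast_add x

lemma aux_ne (q : ℕ) (hq : q.Prime) (x y : ℤ) (hy : y ≠ 0) :
    ((x:ℝ) + (y:ℝ) * Real.sqrt q) ≠ 0 := by
  intro h0; exact (h0 ▸ aux_irr_comb q hq x y hy) ⟨0, by norm_num⟩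

lemma aux_norm (q : ℕ) (hq : q.Prime) (x y : ℤ) (hy : y ≠ 0)
    (hint : IsIntegral ℤ (((x:ℝ) + (y:ℝ) * Real.sqrt q)⁻¹)) :
    x^2 - (q:ℤ)*y^2 = 1 ∨ x^2 - (q:ℤ)*y^2 = -1 := by
  have hs : Real.sqrt q ^ 2 = (q:ℝ) := Real.sq_sqrt (by positivity)
  set s := Real.sqrt q with hsdef
  have hprod : ((x:ℝ) + (y:ℝ)*s) * ((x:ℝ) + ((-y:ℤ):ℝ)*s) = ((x^2 - (q:ℤ)*y^2 : ℤ):ℝ) := by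
    push_cast
    linear_combination (-(y:ℝ)^2) * hs
  have hne1 : ((x:ℝ) + (y:ℝ)*s) ≠ 0 := aux_ne q hq x y hy
  have hne2 : ((x:ℝ) + ((-y:ℤ):ℝ)*s) ≠ 0 := aux_ne q hq x (-y) (neg_ne_zero.mpr hy)
  have hNR : ((x^2 - (q:ℤ)*y^2 : ℤ):ℝ) ≠ 0 := by rw [← hprod]; exact mul_ne_zero hne1 hne2
  have hNz : (x^2 - (q:ℤ)*y^2) ≠ 0 := fun h => hNR (by rw [h]; norm_num)
  have hNQ : ((x^2 - (q:ℤ)*y^2 : ℤ):ℚ) ≠ 0 := fun h => hNz (by exact_mod_cast h)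
  have hinv : ((x:ℝ) + (y:ℝ)*s)⁻¹ = ((x:ℝ) + ((-y:ℤ):ℝ)*s)/((x^2 - (q:ℤ)*y^2 : ℤ):ℝ) := by
    refine inv_eq_of_mul_eq_one_right ?_
    rw [mul_div_assoc', hprod, div_self hNR]
  have hαirr : Irrational (((x:ℝ) + (y:ℝ)*s)⁻¹) := by
    rw [hinv]; exact (aux_irr_comb q hq x (-y) (neg_ne_zero.mpr hy)).div_intCast hNz
  have hintQ : IsIntegral ℚ (((x:ℝ) + (y:ℝ)*s)⁻¹) := hint.tower_top
  set p : ℚ[X] := X^2 + (C (((-(2*x) : ℤ):ℚ)/((x^2 - (q:ℤ)*y^2 : ℤ):ℚ)) * X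
      + C (1/((x^2 - (q:ℤ)*y^2 : ℤ):ℚ))) with hp
  have hpm : p.Monic := monic_X_pow_add (lt_of_le_of_lt (degree_linear_le) (by norm_num))
  have hNα : ((x^2 - (q:ℤ)*y^2 : ℤ):ℝ) * ((x:ℝ) + (y:ℝ)*s)⁻¹ = ((x:ℝ) + ((-y:ℤ):ℝ)*s) := by
    rw [hinv, mul_div_assoc']
    exact mul_div_cancel_left₀ _ hNR
  have hαE : (((x:ℝ) + (y:ℝ)*s)⁻¹) * ((x:ℝ) + (y:ℝ)*s) = 1 := inv_mul_cancel₀ hne1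
  have hNR' : ((x:ℝ)^2 - (q:ℝ)*(y:ℝ)^2) ≠ 0 := by push_cast at hNR; exact hNR
  have key : ((x:ℝ)^2 - (q:ℝ)*(y:ℝ)^2) * (((x:ℝ) + (y:ℝ)*s)⁻¹)^2
      + (-(2*(x:ℝ))) * (((x:ℝ) + (y:ℝ)*s)⁻¹) + 1 = 0 := by
    push_cast at hNα
    linear_combination (((x:ℝ) + (y:ℝ)*s)⁻¹) * hNα - hαE
  have hproot : (aeval (((x:ℝ) + (y:ℝ)*s)⁻¹)) p = 0 := by
    rw [hp]
    simp only [map_add, map_mul, map_pow, aeval_X, aeval_C]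
    simp only [eq_ratCast]
    push_cast
    rw [div_mul_eq_mul_div, div_add_div _ _ hNR' hNR',
      add_div' _ _ _ (mul_ne_zero hNR' hNR'), _root_.div_eq_zero_iff]
    left
    linear_combination ((x:ℝ)^2 - (q:ℝ)*(y:ℝ)^2) * key
  have hdvd := minpoly.dvd ℚ _ hproot
  have hdeg2 : 2 ≤ (minpoly ℚ (((x:ℝ) + (y:ℝ)*s)⁻¹)).natDegree := by
    refine (minpoly.two_le_natDegree_iff hintQ).mpr ?_
    rintro ⟨r, hr⟩
    exact hαirr ⟨r, by rw [← hr, eq_ratCast]⟩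
  have hpdeg : p.natDegree = 2 := by
    have hd : (C (((-(2*x):ℤ):ℚ)/((x^2 - (q:ℤ)*y^2 : ℤ):ℚ)) * X
        + C (1/((x^2 - (q:ℤ)*y^2 : ℤ):ℚ))).degree < (X^2 : ℚ[X]).degree := by
      rw [degree_X_pow]; exact lt_of_le_of_lt degree_linear_le (by norm_num)
    have := degree_add_eq_left_of_degree_lt hd
    rw [degree_X_pow] at this
    rw [hp]
    exact natDegree_eq_of_degree_eq_some this
  obtain ⟨r, hr⟩ := hdvd
  have hmne : minpoly ℚ (((x:ℝ) + (y:ℝ)*s)⁻¹) ≠ 0 := minpoly.ne_zero hintQ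
  have hr0 : r ≠ 0 := by rintro rfl; rw [mul_zero] at hr; exact hpm.ne_zero hr
  have hdegsum : (minpoly ℚ (((x:ℝ) + (y:ℝ)*s)⁻¹)).natDegree + r.natDegree = 2 := by
    rw [← natDegree_mul hmne hr0, ← hr, hpdeg]
  have hrdeg : r.natDegree = 0 := by omega
  have hrC : r = C (r.coeff 0) := Polynomial.eq_C_of_natDegree_eq_zero hrdeg
  have h1 : p.leadingCoeff = (minpoly ℚ (((x:ℝ) + (y:ℝ)*s)⁻¹)).leadingCoeff * r.leadingCoeff := by
    rw [hr, leadingCoeff_mul]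
  rw [hpm.leadingCoeff, (minpoly.monic hintQ).leadingCoeff, one_mul] at h1
  have hrone : r = 1 := by
    rw [hrC]
    rw [hrC, leadingCoeff_C] at h1
    rw [← h1, map_one]
  have hpeq : p = minpoly ℚ (((x:ℝ) + (y:ℝ)*s)⁻¹) := by rw [hr, hrone, mul_one]
  have hc0 : (minpoly ℚ (((x:ℝ) + (y:ℝ)*s)⁻¹)).coeff 0 = 1/((x^2 - (q:ℤ)*y^2 : ℤ):ℚ) := by
    rw [← hpeq, hp]
    simp [coeff_add, coeff_X_pow, coeff_C]
  have hmap := minpoly.isIntegrallyClosed_eq_field_fractions' ℚ hint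
  have hcoe : (((minpoly ℤ (((x:ℝ) + (y:ℝ)*s)⁻¹)).coeff 0 : ℤ) : ℚ)
      = 1/((x^2 - (q:ℤ)*y^2 : ℤ):ℚ) := by
    rw [← hc0, hmap, coeff_map, eq_intCast]
  have hmul : (minpoly ℤ (((x:ℝ) + (y:ℝ)*s)⁻¹)).coeff 0 * (x^2 - (q:ℤ)*y^2) = 1 := by
    have h2 : (((minpoly ℤ (((x:ℝ) + (y:ℝ)*s)⁻¹)).coeff 0 : ℤ) : ℚ)
        * ((x^2 - (q:ℤ)*y^2 : ℤ):ℚ) = 1 := by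
      rw [hcoe, one_div, inv_mul_cancel₀ hNQ]
    exact_mod_cast h2
  have hunit : IsUnit (x^2 - (q:ℤ)*y^2) :=
    IsUnit.of_mul_eq_one _ (by rw [mul_comm]; exact hmul)
  rcases Int.isUnit_iff.mp hunit with h | h
  · exact Or.inl h
  · exact Or.inr h

lemma aux_zmod (q : ℕ) (hq : q.Prime) (hq4 : q % 4 = 3) (a b : ℤ)
    (h : a^2 + 1 = (q:ℤ) * b^2) : False := by
  haveI : Fact q.Prime := ⟨hq⟩
  have h2 : ((a : ZMod q))^2 = -1 := by
    have h3 := congrArg (fun t : ℤ => (t : ZMod q)) h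
    push_cast at h3
    rw [ZMod.natCast_self] at h3
    linear_combination h3
  have hsq : IsSquare (-1 : ZMod q) := ⟨(a : ZMod q), by rw [← h2]; ring⟩
  exact (ZMod.exists_sq_eq_neg_one_iff.mp hsq) hq4

lemma aux_split1 (q : ℕ) (hq : q.Prime) (A B t : ℤ) (hA : 0 < A) (hB : 0 < B) (ht : 0 ≤ t)
    (hcop : IsCoprime A B) (heq : A * B = (q:ℤ) * t^2) (hdvd : (q:ℤ) ∣ B) :
    ∃ a b : ℤ, 0 ≤ a ∧ 0 ≤ b ∧ a * b = t ∧ A = a^2 ∧ B = (q:ℤ)*b^2 := by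
  have hq0 : (0:ℤ) < q := by exact_mod_cast hq.pos
  obtain ⟨c, hc⟩ := hdvd
  have hc0 : 0 < c := by
    have hqc : 0 < (q:ℤ) * c := hc ▸ hB
    rcases mul_pos_iff.mp hqc with ⟨_, h⟩ | ⟨h, _⟩
    · exact h
    · linarith
  have hAc : A * c = t^2 := by
    have h4 : (q:ℤ) * (A*c) = (q:ℤ) * t^2 := by rw [← heq, hc]; ring
    exact mul_left_cancel₀ (ne_of_gt hq0) h4
  have hcopc : IsCoprime A c := hcop.of_isCoprime_of_dvd_right ⟨(q:ℤ), by rw [hc]; ring⟩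
  obtain ⟨a0, ha0⟩ := Int.sq_of_isCoprime hcopc hAc
  obtain ⟨b0, hb0⟩ := Int.sq_of_isCoprime hcopc.symm (by rw [mul_comm]; exact hAc)
  have hA2 : A = a0^2 := by
    rcases ha0 with h|h
    · exact h
    · nlinarith [sq_nonneg a0]
  have hc2 : c = b0^2 := by
    rcases hb0 with h|h
    · exact h
    · nlinarith [sq_nonneg b0]
  refine ⟨|a0|, |b0|, abs_nonneg _, abs_nonneg _, ?_, by rw [hA2, sq_abs],
    by rw [hc, hc2, sq_abs]⟩
  have h3 : (|a0| * |b0|)^2 = t^2 := by rw [mul_pow, sq_abs, sq_abs, ← hA2, ← hc2, hAc]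
  have h4 : (|a0| * |b0| - t) * (|a0| * |b0| + t) = 0 := by linear_combination h3
  rcases mul_eq_zero.mp h4 with h|h
  · linarith
  · have := mul_nonneg (abs_nonneg a0) (abs_nonneg b0); linarith

lemma aux_split (q : ℕ) (hq : q.Prime) (A B t : ℤ) (hA : 0 < A) (hB : 0 < B) (ht : 0 ≤ t)
    (hcop : IsCoprime A B) (heq : A * B = (q:ℤ) * t^2) :
    ∃ a b : ℤ, 0 ≤ a ∧ 0 ≤ b ∧ a * b = t ∧
      ((A = a^2 ∧ B = (q:ℤ)*b^2) ∨ (A = (q:ℤ)*b^2 ∧ B = a^2)) := by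
  have hqp : Prime ((q:ℤ)) := Nat.prime_iff_prime_int.mp hq
  have hdvd : (q:ℤ) ∣ A * B := ⟨t^2, heq⟩
  rcases hqp.dvd_mul.mp hdvd with h | h
  · obtain ⟨a, b, ha, hb, habt, h1, h2⟩ :=
      aux_split1 q hq B A t hB hA ht hcop.symm (by rw [mul_comm]; exact heq) h
    exact ⟨a, b, ha, hb, habt, Or.inr ⟨h2, h1⟩⟩
  · obtain ⟨a, b, ha, hb, habt, h1, h2⟩ := aux_split1 q hq A B t hA hB ht hcop heq h
    exact ⟨a, b, ha, hb, habt, Or.inl ⟨h1, h2⟩⟩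

end Stmt1Aux

open Stmt1Aux in
theorem stmt1 (q : ℕ) (hq : q.Prime) (hq4 : q % 4 = 3)
    (x y : ℤ)
    (hfund : IsFundUnit (Qsqrt q) ((x : ℝ) + (y : ℝ) * Real.sqrt q)) :
    Even x ∧
    ((∃ n : ℕ, x + 1 = (n : ℤ) ^ 2) ∨ (∃ n : ℕ, x - 1 = (n : ℤ) ^ 2)) ∧
    (∃ w : ℝ, w ∈ Qsqrt q ∧ w ^ 2 = 2 * ((x : ℝ) + (y : ℝ) * Real.sqrt q)) := by
  obtain ⟨⟨hmem, hne0, hintε, hintinv⟩, hgt, hmin⟩ := hfund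
  have hs : Real.sqrt q ^ 2 = (q:ℝ) := Real.sq_sqrt (by positivity)
  set s := Real.sqrt q with hsdef
  have hspos : 0 < s := Real.sqrt_pos.mpr (by exact_mod_cast hq.pos)
  have hq3 : 3 ≤ q := by omega
  -- y ≠ 0
  have hy : y ≠ 0 := by
    rintro rfl
    simp only [Int.cast_zero, zero_mul, add_zero] at hgt hintinv
    have hx1 : 1 < x := by exact_mod_cast hgt
    have hxz : ((x:ℚ)) ≠ 0 := by
      intro h; rw [show x = 0 from by exact_mod_cast h] at hx1; omega
    have hmap : (algebraMap ℚ ℝ) ((x:ℚ)⁻¹) = ((x:ℝ))⁻¹ := by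
      rw [eq_ratCast]; push_cast; ring
    have h1 : IsIntegral ℤ ((x:ℚ)⁻¹) :=
      (isIntegral_algebraMap_iff (algebraMap ℚ ℝ).injective).mp (hmap ▸ hintinv)
    obtain ⟨m, hm⟩ := IsIntegrallyClosed.isIntegral_iff.mp h1
    rw [eq_intCast] at hm
    have h2 : (m:ℚ) * (x:ℚ) = 1 := by rw [hm, inv_mul_cancel₀ hxz]
    have h3 : m * x = 1 := by exact_mod_cast h2
    have hu : IsUnit x := IsUnit.of_mul_eq_one m (by rw [mul_comm]; exact h3)
    rcases Int.isUnit_iff.mp hu with h|h <;> omega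
  have hN1 : x^2 - (q:ℤ)*y^2 = 1 := by
    rcases aux_norm q hq x y hy hintinv with h | h
    · exact h
    · exact (aux_zmod q hq hq4 x y (by linarith)).elim
  have hN1' : (x:ℝ)^2 - (q:ℝ)*(y:ℝ)^2 = 1 := by exact_mod_cast hN1
  have hprod : ((x:ℝ) + y*s) * ((x:ℝ) - y*s) = 1 := by
    linear_combination hN1' - (y:ℝ)^2*hs
  have hεpos : (0:ℝ) < (x:ℝ) + y*s := lt_trans one_pos hgt
  have hinvpos : (0:ℝ) < (x:ℝ) - y*s := by nlinarith
  have hinvlt : (x:ℝ) - y*s < 1 := by nlinarith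
  have hxpos : 1 ≤ x := by
    have h1 : (1:ℝ) < 2*(x:ℝ) := by linarith
    have h2 : (1:ℤ) < 2*x := by exact_mod_cast h1
    omega
  have hypos : 1 ≤ y := by
    have h1 : (0:ℝ) < 2*(y:ℝ)*s := by linarith
    have h2 : (0:ℝ) < (y:ℝ) := by nlinarith
    have h3 : 0 < y := by exact_mod_cast h2
    omega
  have hx2 : 2 ≤ x := by nlinarith [hN1, hq3, hxpos, hypos, sq_nonneg (y-1), sq_nonneg (x-1)]
  -- Even x
  have hxeven : Even x := by
    by_contra hodd
    rw [Int.not_even_iff_odd] at hodd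
    obtain ⟨u, hu⟩ := hodd
    have hypar : Even y := by
      by_contra hyodd
      rw [Int.not_even_iff_odd] at hyodd
      have hqodd : Odd (q:ℤ) := by
        have h1 : q % 2 = 1 := by omega
        have h2 : Odd q := Nat.odd_iff.mpr h1
        exact_mod_cast h2
      have hodd2 : Odd ((q:ℤ) * y^2) := hqodd.mul (hyodd.pow)
      have heven2 : Even ((q:ℤ) * y^2) := by
        refine ⟨2*u^2 + 2*u, ?_⟩
        have : (q:ℤ)*y^2 = x^2 - 1 := by linarith
        rw [this, hu]; ring
      exact ((Int.not_odd_iff_even.mpr heven2)) hodd2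
    obtain ⟨t, hty⟩ := hypar
    have hquv : u * (u+1) = (q:ℤ) * t^2 := by
      have h4 : 4*(u*(u+1)) = 4*((q:ℤ)*t^2) := by
        have := hN1
        rw [hu, hty] at this
        linear_combination this
      exact mul_left_cancel₀ (by norm_num) h4
    have hupos : 1 ≤ u := by omega
    have htpos : 1 ≤ t := by omega
    have hcop : IsCoprime u (u+1) := ⟨-1, 1, by ring⟩
    obtain ⟨a, b, ha, hb, habt, hsplit⟩ :=
      aux_split q hq u (u+1) t (by omega) (by omega) (by omega) hcop hquv
    rcases hsplit with ⟨hA, hB⟩ | ⟨hA, hB⟩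
    · exact aux_zmod q hq hq4 a b (by linarith)
    · have hnb : a^2 - (q:ℤ)*b^2 = 1 := by linarith
      obtain ⟨n, hn⟩ := hmin _ (aux_unit q a b hnb)
      have hAr : (u:ℝ) = (q:ℝ)*(b:ℝ)^2 := by exact_mod_cast hA
      have hBr : (u:ℝ)+1 = (a:ℝ)^2 := by exact_mod_cast hB
      have habtr : (a:ℝ)*(b:ℝ) = (t:ℝ) := by exact_mod_cast habt
      have hxr : (x:ℝ) = 2*(u:ℝ)+1 := by exact_mod_cast hu
      have hyr : (y:ℝ) = (t:ℝ)+(t:ℝ) := by exact_mod_cast hty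
      have hη2 : ((a:ℝ) + (b:ℝ)*s)^2 = (x:ℝ) + (y:ℝ)*s := by
        linear_combination -hBr + (b:ℝ)^2*hs - hxr - hAr - s*hyr + 2*s*habtr
      have ha1 : 1 ≤ a := by nlinarith
      have hηpos : (0:ℝ) < (a:ℝ) + (b:ℝ)*s := by
        have h1 : (1:ℝ) ≤ (a:ℝ) := by exact_mod_cast ha1
        have h2 : (0:ℝ) ≤ (b:ℝ) := by exact_mod_cast hb
        nlinarith
      rcases hn with hn | hn
      · have hsq : (((x:ℝ)+y*s)^n) * (((x:ℝ)+y*s)^n) = (x:ℝ)+y*s := by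
          rw [← hn, ← pow_two]; exact hη2
        have hkey : ((x:ℝ)+y*s)^(n+n) = ((x:ℝ)+y*s)^(1:ℤ) := by
          rw [zpow_add₀ (ne_of_gt hεpos), zpow_one, hsq]
        have := zpow_right_injective₀ hεpos (ne_of_gt hgt) hkey
        omega
      · have h1 : (0:ℝ) < ((x:ℝ)+y*s)^n := zpow_pos hεpos n
        rw [hn] at hηpos
        linarith
  -- squares
  obtain ⟨u0, hu0⟩ := hxeven
  have heq2 : (x-1) * (x+1) = (q:ℤ) * y^2 := by linear_combination hN1
  have hcop2 : IsCoprime (x-1) (x+1) := ⟨-(u0+1), u0, by rw [hu0]; ring⟩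
  obtain ⟨a, b, ha, hb, haby, hsplit⟩ :=
    aux_split q hq (x-1) (x+1) y (by omega) (by omega) (by omega) hcop2 heq2
  refine ⟨⟨u0, hu0⟩, ?_, ?_⟩
  · rcases hsplit with ⟨hA, hB⟩ | ⟨hA, hB⟩
    · exact Or.inr ⟨a.toNat, by rw [Int.toNat_of_nonneg ha]; exact hA⟩
    · exact Or.inl ⟨a.toNat, by rw [Int.toNat_of_nonneg ha]; exact hB⟩
  · refine ⟨(a:ℝ) + (b:ℝ)*s, aux_mem q a b, ?_⟩
    have habyr : (a:ℝ)*(b:ℝ) = (y:ℝ) := by exact_mod_cast haby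
    rcases hsplit with ⟨hA, hB⟩ | ⟨hA, hB⟩
    · have hAr : (x:ℝ)-1 = (a:ℝ)^2 := by exact_mod_cast hA
      have hBr : (x:ℝ)+1 = (q:ℝ)*(b:ℝ)^2 := by exact_mod_cast hB
      linear_combination -hAr - hBr + 2*s*habyr + (b:ℝ)^2*hs
    · have hAr : (x:ℝ)-1 = (q:ℝ)*(b:ℝ)^2 := by exact_mod_cast hA
      have hBr : (x:ℝ)+1 = (a:ℝ)^2 := by exact_mod_cast hB
      linear_combination -hAr - hBr + 2*s*habyr + (b:ℝ)^2*hs
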